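/- Let f be a real polynomial in d variables whose total degree n = 2m is even and whose degree-n homogeneous part f_n satisfies f_n(x) > 0 for every nonzero x ∈ ℝ^d. Then f is bounded from below on ℝ^d, i.e., there exists μ ∈ ℝ with f(x) ≥ μ for all x ∈ ℝ^d. -/

import Mathlib

open MvPolynomial Finset Filter

variable {d : ℕ}

lemma my_eval_smul (p : MvPolynomial (Fin d) ℝ) (n : ℕ) (hp : p.IsHomogeneous n)
    (r : ℝ) (x : Fin d → ℝ) : eval (r • x) p = r ^ n * eval x p := by
  rw [eval_eq, eval_eq, Finset.mul_sum]
  refine Finset.sum_congr rfl fun e he => ?_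
  have hdeg : ∑ i ∈ e.support, e i = n := by
    have := hp (mem_support_iff.mp he)
    simpa [Finsupp.weight, Finsupp.linearCombination, Finsupp.sum] using this
  calc p.coeff e * ∏ i ∈ e.support, (r • x) i ^ e i
      = p.coeff e * ((∏ i ∈ e.support, r ^ e i) * ∏ i ∈ e.support, x i ^ e i) := by
        rw [← Finset.prod_mul_distrib]
        simp [mul_pow]
    _ = r ^ n * (p.coeff e * ∏ i ∈ e.support, x i ^ e i) := by
        rw [Finset.prod_pow_eq_pow_sum, hdeg]; ring

lemma my_eval_bound (p : MvPolynomial (Fin d) ℝ) (k : ℕ) (hk : p.totalDegree ≤ k)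
    (x : Fin d → ℝ) :
    |eval x p| ≤ (∑ e ∈ p.support, |p.coeff e|) * (‖x‖ + 1) ^ k := by
  have h1 : (1:ℝ) ≤ ‖x‖ + 1 := by linarith [norm_nonneg x]
  rw [eval_eq, Finset.sum_mul]
  refine (Finset.abs_sum_le_sum_abs _ _).trans (Finset.sum_le_sum fun e he => ?_)
  rw [abs_mul]
  refine mul_le_mul_of_nonneg_left ?_ (abs_nonneg _)
  calc |∏ i ∈ e.support, x i ^ e i| = ∏ i ∈ e.support, |x i| ^ e i := by
        rw [Finset.abs_prod]; simp [abs_pow]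
    _ ≤ ∏ i ∈ e.support, (‖x‖ + 1) ^ e i := by
        refine Finset.prod_le_prod (fun i _ => by positivity) fun i _ => ?_
        exact pow_le_pow_left₀ (abs_nonneg _)
          ((norm_le_pi_norm x i).trans (by linarith)) _
    _ = (‖x‖ + 1) ^ (∑ i ∈ e.support, e i) := Finset.prod_pow_eq_pow_sum _ _ _
    _ ≤ (‖x‖ + 1) ^ k := pow_le_pow_right₀ h1 ((le_totalDegree he).trans hk)

/-- Condition (*): if `f` has even total degree `2*m` and its top homogeneous part is
positive away from the origin, then `f` is bounded from below on `ℝ^d`. -/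
theorem bddBelow_of_star_condition (d m : ℕ) (f : MvPolynomial (Fin d) ℝ)
    (hdeg : f.totalDegree = 2 * m)
    (hhom : ∀ x : Fin d → ℝ, x ≠ 0 →
      0 < eval x (homogeneousComponent f.totalDegree f)) :
    ∃ μ : ℝ, ∀ x : Fin d → ℝ, μ ≤ eval x f := by
  rcases Nat.eq_zero_or_pos d with hd | hd
  · subst hd
    exact ⟨eval 0 f, fun x => le_of_eq (by rw [Subsingleton.elim (0 : Fin 0 → ℝ) x])⟩
  haveI : Nonempty (Fin d) := Fin.pos_iff_nonempty.mp hd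
  rcases Nat.eq_zero_or_pos m with hm | hm
  · refine ⟨eval 0 f, fun x => le_of_eq ?_⟩
    have h0 : f.IsHomogeneous 0 := isHomogeneous_of_totalDegree_zero (Fin d) (p := f) (by omega)
    have := my_eval_smul f 0 h0 0 x
    simpa using this
  -- main case
  set n := f.totalDegree with hn
  obtain ⟨k, hk⟩ : ∃ k, n = k + 1 := ⟨n - 1, by omega⟩
  set F := homogeneousComponent n f with hF
  have hFhom : F.IsHomogeneous n := homogeneousComponent_isHomogeneous n f
  set g := f - F with hg
  -- degree bound on g
  have hgdeg : g.totalDegree ≤ k := by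
    apply Finset.sup_le
    intro e he
    rw [mem_support_iff] at he
    have hcoef : coeff e g = coeff e f - (if e.degree = n then coeff e f else 0) := by
      rw [hg, coeff_sub, coeff_homogeneousComponent]
    have hne : e.degree ≠ n := by
      intro h; rw [h] at hcoef; simp at hcoef; exact he hcoef
    have hef : coeff e f ≠ 0 := by
      intro h; rw [h] at hcoef; simp at hcoef; exact he hcoef
    have hle : e.degree ≤ n := by
      have := le_totalDegree (mem_support_iff.mpr hef)
      simpa [Finsupp.degree_apply, Finsupp.sum] using this
    have : e.degree ≤ k := by omega
    simpa [Finsupp.degree_apply, Finsupp.sum] using this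
  set C := ∑ e ∈ g.support, |g.coeff e| with hC
  have hCnn : 0 ≤ C := Finset.sum_nonneg fun _ _ => abs_nonneg _
  -- minimum of F on the unit sphere
  have hsne : (Metric.sphere (0 : Fin d → ℝ) 1).Nonempty := by
    refine ⟨fun _ => 1, ?_⟩
    simp [pi_norm_const]
  obtain ⟨x₀, hx₀mem, hx₀min⟩ := (isCompact_sphere (0 : Fin d → ℝ) 1).exists_isMinOn hsne
    (MvPolynomial.continuous_eval F).continuousOn
  have hx₀ : ‖x₀‖ = 1 := by simpa using hx₀mem
  set c := eval x₀ F with hc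
  have hcpos : 0 < c := hhom x₀ (by intro h; rw [h] at hx₀; simp at hx₀)
  -- lower bound for F
  have hFlb : ∀ x : Fin d → ℝ, x ≠ 0 → c * ‖x‖ ^ n ≤ eval x F := by
    intro x hx
    have hnx : 0 < ‖x‖ := norm_pos_iff.mpr hx
    set u := ‖x‖⁻¹ • x with hu
    have hune : ‖u‖ = 1 := by
      rw [hu, norm_smul]
      simp [abs_of_pos (inv_pos.mpr hnx), inv_mul_cancel₀ hnx.ne']
    have hxu : x = ‖x‖ • u := by
      rw [hu, smul_smul, mul_inv_cancel₀ hnx.ne', one_smul]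
    have := my_eval_smul F n hFhom ‖x‖ u
    rw [← hxu] at this
    rw [this, mul_comm]
    have : c ≤ eval u F := hx₀min (by simpa using hune)
    exact mul_le_mul_of_nonneg_left this (by positivity)
  set C' := C * 2 ^ k with hC'
  have hC'nn : 0 ≤ C' := by positivity
  -- eventual lower bound
  have key : ∀ x : Fin d → ℝ, max 1 (C' / c) ≤ ‖x‖ → c * ‖x‖ - C' ≤ eval x f := by
    intro x hx
    have hr1 : (1:ℝ) ≤ ‖x‖ := le_trans (le_max_left _ _) hx
    have hrC : C' / c ≤ ‖x‖ := le_trans (le_max_right _ _) hx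
    have hrpos : 0 < ‖x‖ := by linarith
    have hxne : x ≠ 0 := fun h => by simp [h] at hrpos
    have h1 := hFlb x hxne
    have h2 := my_eval_bound g k hgdeg x
    have heval : eval x f = eval x F + eval x g := by
      rw [hg]; simp [eval_sub]
    set r := ‖x‖
    have hb1 : C * (r + 1) ^ k ≤ C' * r ^ k := by
      rw [hC']
      calc C * (r + 1) ^ k ≤ C * (2 * r) ^ k := by
            refine mul_le_mul_of_nonneg_left (pow_le_pow_left₀ (by linarith) (by linarith) _) hCnn
        _ = C * 2 ^ k * r ^ k := by rw [mul_pow]; ring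
    have hcrC : 0 ≤ c * r - C' := by
      have := (div_le_iff₀ hcpos).mp hrC
      linarith
    have hrk : 1 ≤ r ^ k := one_le_pow₀ hr1
    have hrn : r ^ n = r ^ k * r := by rw [hk, pow_succ]
    have : c * r - C' ≤ (c * r - C') * r ^ k := le_mul_of_one_le_right hcrC hrk
    have hfinal : c * r ^ n - C' * r ^ k = (c * r - C') * r ^ k := by rw [hrn]; ring
    have habs : -(C * (r + 1) ^ k) ≤ eval x g := by
      linarith [(abs_le.mp h2).1]
    rw [heval]
    nlinarith [h1, habs, hb1]
  -- tendsto and conclusion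
  have htend : Tendsto (fun x : Fin d → ℝ => eval x f) (cocompact _) atTop := by
    have hnorm : Tendsto (fun x : Fin d → ℝ => ‖x‖) (cocompact _) atTop :=
      tendsto_norm_cocompact_atTop
    have hlin : Tendsto (fun x : Fin d → ℝ => c * ‖x‖ - C') (cocompact _) atTop := by
      have := (hnorm.const_mul_atTop hcpos)
      simpa [sub_eq_add_neg] using tendsto_atTop_add_const_right _ (-C') this
    refine tendsto_atTop_mono' _ ?_ hlin
    filter_upwards [hnorm.eventually (eventually_ge_atTop (max 1 (C' / c)))] with x hx
    exact key x hx
  obtain ⟨x₀', hmin⟩ := (MvPolynomial.continuous_eval f).exists_forall_le htend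
  exact ⟨eval x₀' f, hmin⟩
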